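/- For Hermite functions φ_k(s) = (k!√(2π))^{-1/2} e^{-s²/4} F_k(s), where F_k(s) = (-1)^k e^{s²/2} (d/ds)^k e^{-s²/2} is the k-th Hermite polynomial, and for any ξ ∈ ℝ and k ∈ ℕ, one has ∫_ℝ φ_k(y+2iξ) φ_k(y-2iξ) dy = e^{2ξ²} Σ_{j=0}^{k} (C(k,j)/j!) (4ξ²)^j. -/

import Mathlib

open Complex MeasureTheory

/-- The `k`-th (probabilists') Hermite polynomial evaluated at a complex number. -/
noncomputable def hermiteC (k : ℕ) (s : ℂ) : ℂ :=
  Polynomial.aeval s (Polynomial.hermite k)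

/-- The normalized Hermite function `φ_k(s) = (k!√(2π))^{-1/2} e^{-s²/4} F_k(s)`,
extended to complex arguments as an entire function. -/
noncomputable def hermiteFun (k : ℕ) (s : ℂ) : ℂ :=
  ((k.factorial : ℂ) * (Real.sqrt (2 * Real.pi) : ℂ)) ^ (-(1 : ℂ) / 2) *
    Complex.exp (-s ^ 2 / 4) * hermiteC k s

section HermiteAux
open Polynomial Real

noncomputable def HP (R : Type*) [CommRing R] (n : ℕ) : R[X] :=
  (hermite n).map (Int.castRingHom R)

variable {R : Type*} [CommRing R]

lemma HP_zero : HP R 0 = 1 := by simp [HP, hermite_zero]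

lemma HP_succ (n : ℕ) : HP R (n + 1) = X * HP R n - derivative (HP R n) := by
  simp [HP, hermite_succ, Polynomial.derivative_map]

lemma derivative_HP (n : ℕ) : derivative (HP R n) = n • HP R (n - 1) := by
  induction n with
  | zero => simp [HP_zero]
  | succ n ih =>
    cases n with
    | zero => simp [HP_succ, HP_zero]
    | succ m =>
      rw [HP_succ, derivative_sub, derivative_mul, derivative_X, one_mul, ih]
      simp only [Nat.add_sub_cancel]
      rw [mul_smul_comm, derivative_smul, add_sub_assoc, ← smul_sub, ← HP_succ, succ_nsmul]
      rw [add_smul, add_nsmul]; abel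

lemma iterate_derivative_HP (m n : ℕ) :
    derivative^[m] (HP R n) = (n.descFactorial m) • HP R (n - m) := by
  induction m with
  | zero => simp
  | succ m ih =>
    rw [Function.iterate_succ_apply', ih, derivative_smul, derivative_HP,
      Nat.descFactorial_succ, Nat.sub_sub, smul_smul, mul_comm]

lemma hermiteC_eq (k : ℕ) (s : ℂ) : hermiteC k s = (HP ℂ k).eval s := by
  simp [hermiteC, HP, aeval_def, eval₂_eq_eval_map]

lemma hasseDeriv_HP (i k : ℕ) : hasseDeriv i (HP ℂ k) = (k.choose i) • HP ℂ (k - i) := by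
  have h2 : (Nat.factorial i) • hasseDeriv i (HP ℂ k) = derivative^[i] (HP ℂ k) := by
    rw [← Polynomial.factorial_smul_hasseDeriv]; rfl
  rw [iterate_derivative_HP, Nat.descFactorial_eq_factorial_mul_choose, mul_smul] at h2
  have hne : ((Nat.factorial i : ℕ) : ℂ[X]) ≠ 0 := by
    exact_mod_cast Nat.cast_ne_zero.mpr i.factorial_ne_zero
  have := h2
  rw [nsmul_eq_mul, nsmul_eq_mul (α := ℂ[X])] at this
  exact mul_left_cancel₀ hne this

lemma natDegree_HP_C (k : ℕ) : (HP ℂ k).natDegree = k := by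
  rw [HP, natDegree_map_eq_of_injective Int.cast_injective]
  exact natDegree_hermite

lemma hermiteC_add (k : ℕ) (x a : ℂ) :
    hermiteC k (x + a) =
      ∑ i ∈ Finset.range (k + 1), (k.choose i : ℂ) * hermiteC (k - i) x * a ^ i := by
  rw [hermiteC_eq, show x + a = a + x by ring, ← taylor_eval,
    eval_eq_sum_range' (n := k + 1) (by rw [natDegree_taylor, natDegree_HP_C]; omega)]
  refine Finset.sum_congr rfl fun i _ => ?_
  rw [taylor_coeff, hasseDeriv_HP, eval_smul, hermiteC_eq, nsmul_eq_mul]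

lemma HP_real_cast (n : ℕ) (y : ℝ) : (((HP ℝ n).eval y : ℝ) : ℂ) = hermiteC n (y : ℂ) := by
  rw [hermiteC_eq, show HP ℂ n = (HP ℝ n).map (algebraMap ℝ ℂ) by
    rw [HP, HP, map_map]; rfl]
  rw [eval_map, ← Complex.coe_algebraMap, eval₂_at_apply]

lemma integrable_pow_gauss (n : ℕ) :
    Integrable fun y : ℝ => y ^ n * Real.exp (-(2⁻¹) * y ^ 2) := by
  have h := integrable_rpow_mul_exp_neg_mul_sq (b := 2⁻¹) (by norm_num)
    (s := (n : ℝ)) (lt_of_lt_of_le (by norm_num) (Nat.cast_nonneg n))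
  simpa [Real.rpow_natCast] using h

lemma integrable_gauss_poly (p : ℝ[X]) :
    Integrable fun y : ℝ => Real.exp (-(2⁻¹) * y ^ 2) * p.eval y := by
  have : (fun y : ℝ => Real.exp (-(2⁻¹) * y ^ 2) * p.eval y) =
      fun y : ℝ => ∑ i ∈ Finset.range (p.natDegree + 1),
        p.coeff i * (y ^ i * Real.exp (-(2⁻¹) * y ^ 2)) := by
    funext y
    rw [eval_eq_sum_range, Finset.mul_sum]
    exact Finset.sum_congr rfl fun i _ => by ring
  rw [this]
  exact integrable_finset_sum _ fun i _ => (integrable_pow_gauss i).const_mul _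

lemma hasDerivAt_gaussHP (n : ℕ) (y : ℝ) :
    HasDerivAt (fun y : ℝ => Real.exp (-(2⁻¹) * y ^ 2) * (HP ℝ n).eval y)
      (-(Real.exp (-(2⁻¹) * y ^ 2) * (HP ℝ (n + 1)).eval y)) y := by
  have h0 : HasDerivAt (fun y : ℝ => -(2⁻¹) * y ^ 2) (-y) y := by
    have := (hasDerivAt_pow 2 y).const_mul (-(2⁻¹) : ℝ)
    simpa using this.congr_deriv (by ring)
  have h1 := h0.exp
  have h2 := (HP ℝ n).hasDerivAt y
  have h := h1.mul h2
  refine h.congr_deriv ?_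
  rw [HP_succ]
  simp only [eval_sub, eval_mul, eval_X]
  ring

lemma ibp_step (n : ℕ) (q : ℝ[X]) :
    ∫ y : ℝ, Real.exp (-(2⁻¹) * y ^ 2) * ((HP ℝ (n + 1)).eval y * q.eval y) =
    ∫ y : ℝ, Real.exp (-(2⁻¹) * y ^ 2) * ((HP ℝ n).eval y * (derivative q).eval y) := by
  have key := integral_mul_deriv_eq_deriv_mul_of_integrable
    (u := fun y : ℝ => Real.exp (-(2⁻¹) * y ^ 2) * (HP ℝ n).eval y)
    (v := fun y : ℝ => q.eval y)
    (u' := fun y : ℝ => -(Real.exp (-(2⁻¹) * y ^ 2) * (HP ℝ (n + 1)).eval y))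
    (v' := fun y : ℝ => (derivative q).eval y)
    (fun y _ => hasDerivAt_gaussHP n y) (fun y _ => q.hasDerivAt y)
    (by
      have := integrable_gauss_poly (HP ℝ n * derivative q)
      apply this.congr
      filter_upwards with y
      simp [eval_mul]; ring)
    (by
      have := (integrable_gauss_poly (HP ℝ (n + 1) * q)).neg
      apply this.congr
      filter_upwards with y
      simp [eval_mul]; ring)
    (by
      have := integrable_gauss_poly (HP ℝ n * q)
      apply this.congr
      filter_upwards with y
      simp [eval_mul]; ring)
  calc ∫ y : ℝ, Real.exp (-(2⁻¹) * y ^ 2) * ((HP ℝ (n + 1)).eval y * q.eval y)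
      = -∫ y : ℝ, -(Real.exp (-(2⁻¹) * y ^ 2) * (HP ℝ (n + 1)).eval y) * q.eval y := by
        rw [← integral_neg]; congr 1; funext y; ring
    _ = ∫ y : ℝ, (Real.exp (-(2⁻¹) * y ^ 2) * (HP ℝ n).eval y) * (derivative q).eval y :=
        key.symm
    _ = _ := by congr 1; funext y; ring

lemma ortho_aux (n : ℕ) : ∀ q : ℝ[X],
    ∫ y : ℝ, Real.exp (-(2⁻¹) * y ^ 2) * ((HP ℝ n).eval y * q.eval y) =
    ∫ y : ℝ, Real.exp (-(2⁻¹) * y ^ 2) * (derivative^[n] q).eval y := by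
  induction n with
  | zero => intro q; simp [HP_zero]
  | succ n ih =>
    intro q
    rw [ibp_step n q, ih (derivative q), ← Function.iterate_succ_apply]

lemma gauss_value : ∫ y : ℝ, Real.exp (-(2⁻¹) * y ^ 2) = Real.sqrt (2 * π) := by
  have := integral_gaussian 2⁻¹
  rw [this, show π / 2⁻¹ = 2 * π by ring]

lemma ortho (n j : ℕ) :
    ∫ y : ℝ, Real.exp (-(2⁻¹) * y ^ 2) * ((HP ℝ n).eval y * (HP ℝ j).eval y) =
      if n = j then (n.factorial : ℝ) * Real.sqrt (2 * π) else 0 := by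
  rw [ortho_aux n (HP ℝ j), iterate_derivative_HP]
  rcases lt_trichotomy n j with h | h | h
  · rw [if_neg h.ne]
    obtain ⟨m, hm⟩ : ∃ m, j - n = m + 1 := ⟨j - n - 1, by omega⟩
    rw [hm]
    have key := ortho_aux (m + 1) 1
    have h1 : derivative^[m + 1] (1 : ℝ[X]) = 0 := by
      rw [Function.iterate_succ_apply, Polynomial.derivative_one]
      exact Polynomial.iterate_derivative_zero
    rw [h1] at key
    simp only [eval_one, mul_one, eval_zero, mul_zero, integral_zero] at key
    calc ∫ y : ℝ, Real.exp (-(2⁻¹) * y ^ 2) * eval y ((j.descFactorial n) • HP ℝ (m + 1))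
        = (j.descFactorial n : ℝ) * ∫ y : ℝ, Real.exp (-(2⁻¹) * y ^ 2) * eval y (HP ℝ (m + 1)) := by
          rw [← MeasureTheory.integral_const_mul]; congr 1; funext y; simp [eval_smul]; ring
      _ = 0 := by rw [key, mul_zero]
  · subst h
    rw [if_pos rfl, Nat.descFactorial_self, Nat.sub_self, HP_zero]
    simp only [eval_smul, eval_one, smul_eq_mul, mul_one]
    rw [MeasureTheory.integral_mul_const, gauss_value]
    ring
  · rw [if_neg h.ne', Nat.descFactorial_eq_zero_iff_lt.mpr h]
    simp

noncomputable def gR (i j : ℕ) (y : ℝ) : ℝ :=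
  Real.exp (-(2⁻¹) * y ^ 2) * ((HP ℝ i).eval y * (HP ℝ j).eval y)

noncomputable def dC (k : ℕ) (ξ : ℝ) (i j : ℕ) : ℂ :=
  ((k.factorial : ℂ) * (Real.sqrt (2 * Real.pi) : ℂ))⁻¹ * (Real.exp (2 * ξ ^ 2) : ℂ) *
    (k.choose i : ℂ) * (k.choose j : ℂ) * (2 * I * ξ) ^ i * (-(2 * I * (ξ : ℂ))) ^ j

lemma sqrt2pi_ne : ((Real.sqrt (2 * Real.pi) : ℝ) : ℂ) ≠ 0 := by
  rw [Complex.ofReal_ne_zero]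
  exact Real.sqrt_ne_zero'.mpr (by positivity)

lemma r_ne (k : ℕ) : ((k.factorial : ℂ) * (Real.sqrt (2 * Real.pi) : ℂ)) ≠ 0 :=
  mul_ne_zero (Nat.cast_ne_zero.mpr k.factorial_ne_zero) sqrt2pi_ne

lemma integrand_eq (k : ℕ) (ξ : ℝ) (y : ℝ) :
    hermiteFun k (↑y + 2 * I * ↑ξ) * hermiteFun k (↑y - 2 * I * ↑ξ) =
      ∑ i ∈ Finset.range (k + 1), ∑ j ∈ Finset.range (k + 1),
        dC k ξ i j * ((gR (k - i) (k - j) y : ℝ) : ℂ) := by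
  set r : ℂ := (k.factorial : ℂ) * (Real.sqrt (2 * Real.pi) : ℂ) with hrdef
  have hc : r ^ (-(1 : ℂ) / 2) * r ^ (-(1 : ℂ) / 2) = r⁻¹ := by
    rw [← Complex.cpow_add _ _ (r_ne k), show -(1 : ℂ) / 2 + -(1 : ℂ) / 2 = -1 by ring,
      Complex.cpow_neg_one]
  have hexp : Complex.exp (-(↑y + 2 * I * ↑ξ) ^ 2 / 4) *
      Complex.exp (-(↑y - 2 * I * ↑ξ) ^ 2 / 4) =
      ((Real.exp (2 * ξ ^ 2) : ℝ) : ℂ) * ((Real.exp (-(2⁻¹) * y ^ 2) : ℝ) : ℂ) := by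
    rw [← Complex.exp_add, Complex.ofReal_exp, Complex.ofReal_exp, ← Complex.exp_add]
    congr 1
    push_cast
    linear_combination (-2 * (ξ : ℂ) ^ 2) * Complex.I_sq
  have h1 : hermiteC k (↑y + 2 * I * ↑ξ) =
      ∑ i ∈ Finset.range (k + 1), (k.choose i : ℂ) * hermiteC (k - i) ↑y * (2 * I * ↑ξ) ^ i :=
    hermiteC_add k _ _
  have h2 : hermiteC k (↑y - 2 * I * ↑ξ) =
      ∑ j ∈ Finset.range (k + 1), (k.choose j : ℂ) * hermiteC (k - j) ↑y * (-(2 * I * ↑ξ)) ^ j := by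
    rw [sub_eq_add_neg]; exact hermiteC_add k _ _
  calc hermiteFun k (↑y + 2 * I * ↑ξ) * hermiteFun k (↑y - 2 * I * ↑ξ)
      = (r ^ (-(1 : ℂ) / 2) * r ^ (-(1 : ℂ) / 2)) *
        (Complex.exp (-(↑y + 2 * I * ↑ξ) ^ 2 / 4) * Complex.exp (-(↑y - 2 * I * ↑ξ) ^ 2 / 4)) *
        (hermiteC k (↑y + 2 * I * ↑ξ) * hermiteC k (↑y - 2 * I * ↑ξ)) := by
        rw [hermiteFun, hermiteFun]; ring
    _ = r⁻¹ * (((Real.exp (2 * ξ ^ 2) : ℝ) : ℂ) * ((Real.exp (-(2⁻¹) * y ^ 2) : ℝ) : ℂ)) *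
        ((∑ i ∈ Finset.range (k + 1), (k.choose i : ℂ) * hermiteC (k - i) ↑y * (2 * I * ↑ξ) ^ i) *
         (∑ j ∈ Finset.range (k + 1), (k.choose j : ℂ) * hermiteC (k - j) ↑y * (-(2 * I * ↑ξ)) ^ j)) := by
        rw [hc, hexp, h1, h2]
    _ = _ := by
        rw [Finset.sum_mul_sum]
        rw [Finset.mul_sum]
        refine Finset.sum_congr rfl fun i _ => ?_
        rw [Finset.mul_sum]
        refine Finset.sum_congr rfl fun j _ => ?_
        rw [dC, gR, Complex.ofReal_mul, Complex.ofReal_mul, HP_real_cast, HP_real_cast]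
        ring


end HermiteAux

open Polynomial Real in
/-- For any `ξ ∈ ℝ` and `k ∈ ℕ`,
`∫_ℝ φ_k(y+2iξ) φ_k(y-2iξ) dy = e^{2ξ²} Σ_{j=0}^{k} (C(k,j)/j!) (4ξ²)^j`. -/
theorem hermite_shifted_norm (k : ℕ) (ξ : ℝ) :
    ∫ y : ℝ, hermiteFun k (y + 2 * I * ξ) * hermiteFun k (y - 2 * I * ξ) =
      (Real.exp (2 * ξ ^ 2) : ℂ) *
        ∑ j ∈ Finset.range (k + 1),
          ((k.choose j : ℂ) / (j.factorial : ℂ)) * (4 * (ξ : ℂ) ^ 2) ^ j := by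
  have hgint : ∀ i j : ℕ, Integrable fun y : ℝ => ((gR i j y : ℝ) : ℂ) := by
    intro i j
    apply Integrable.ofReal
    have := integrable_gauss_poly (HP ℝ i * HP ℝ j)
    refine this.congr (Filter.Eventually.of_forall fun y => ?_)
    show Real.exp (-(2⁻¹) * y ^ 2) * (HP ℝ i * HP ℝ j).eval y = gR i j y
    rw [gR, eval_mul]
  have hstep : ∫ y : ℝ, hermiteFun k (y + 2 * I * ξ) * hermiteFun k (y - 2 * I * ξ) =
      ∑ i ∈ Finset.range (k + 1), ∑ j ∈ Finset.range (k + 1),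
        dC k ξ i j * ((∫ y : ℝ, gR (k - i) (k - j) y : ℝ) : ℂ) := by
    rw [show (fun y : ℝ => hermiteFun k (↑y + 2 * I * ↑ξ) * hermiteFun k (↑y - 2 * I * ↑ξ)) =
        fun y : ℝ => ∑ i ∈ Finset.range (k + 1), ∑ j ∈ Finset.range (k + 1),
          dC k ξ i j * ((gR (k - i) (k - j) y : ℝ) : ℂ) from funext (integrand_eq k ξ)]
    rw [integral_finset_sum _ fun i _ =>
      integrable_finset_sum _ fun j _ => (hgint _ _).const_mul _]
    refine Finset.sum_congr rfl fun i _ => ?_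
    rw [integral_finset_sum _ fun j _ => (hgint _ _).const_mul _]
    refine Finset.sum_congr rfl fun j _ => ?_
    rw [MeasureTheory.integral_const_mul]
    congr 1
    exact integral_ofReal
  rw [hstep]
  have hortho : ∀ i j : ℕ, (∫ y : ℝ, gR i j y) =
      if i = j then (i.factorial : ℝ) * Real.sqrt (2 * Real.pi) else 0 := ortho
  have hcollapse : ∀ i ∈ Finset.range (k + 1),
      ∑ j ∈ Finset.range (k + 1), dC k ξ i j * ((∫ y : ℝ, gR (k - i) (k - j) y : ℝ) : ℂ) =
      dC k ξ i i * ((((k - i).factorial : ℝ) * Real.sqrt (2 * Real.pi) : ℝ) : ℂ) := by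
    intro i hi
    rw [Finset.mem_range] at hi
    rw [show dC k ξ i i * ((((k - i).factorial : ℝ) * Real.sqrt (2 * Real.pi) : ℝ) : ℂ) =
        dC k ξ i i * ((∫ y : ℝ, gR (k - i) (k - i) y : ℝ) : ℂ) by rw [hortho, if_pos rfl]]
    refine Finset.sum_eq_single_of_mem i (Finset.mem_range.mpr hi) fun j hj hne => ?_
    rw [Finset.mem_range] at hj
    rw [hortho, if_neg (by omega : ¬ (k - i = k - j))]
    simp
  rw [Finset.sum_congr rfl hcollapse]
  have hval : ∀ i ∈ Finset.range (k + 1),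
      dC k ξ i i * ((((k - i).factorial : ℝ) * Real.sqrt (2 * Real.pi) : ℝ) : ℂ) =
      (Real.exp (2 * ξ ^ 2) : ℂ) * (((k.choose i : ℂ) / (i.factorial : ℂ)) * (4 * (ξ : ℂ) ^ 2) ^ i) := by
    intro i hi
    rw [Finset.mem_range] at hi
    have hle : i ≤ k := by omega
    have hpow : (2 * I * (ξ : ℂ)) ^ i * (-(2 * I * (ξ : ℂ))) ^ i = (4 * (ξ : ℂ) ^ 2) ^ i := by
      rw [← mul_pow]
      congr 1
      linear_combination (-4 * (ξ : ℂ) ^ 2) * Complex.I_sq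
    have hfact : (k.factorial : ℂ) = (k.choose i : ℂ) * (i.factorial : ℂ) * ((k - i).factorial : ℂ) := by
      exact_mod_cast congrArg (Nat.cast : ℕ → ℂ) (Nat.choose_mul_factorial_mul_factorial hle).symm
    have hi_ne : (i.factorial : ℂ) ≠ 0 := Nat.cast_ne_zero.mpr i.factorial_ne_zero
    have hki_ne : ((k - i).factorial : ℂ) ≠ 0 := Nat.cast_ne_zero.mpr (k - i).factorial_ne_zero
    have hc_ne : (k.choose i : ℂ) ≠ 0 := Nat.cast_ne_zero.mpr (Nat.choose_pos hle).ne'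
    calc dC k ξ i i * ((((k - i).factorial : ℝ) * Real.sqrt (2 * Real.pi) : ℝ) : ℂ)
        = ((k.factorial : ℂ) * (Real.sqrt (2 * Real.pi) : ℂ))⁻¹ * (Real.exp (2 * ξ ^ 2) : ℂ) *
            (k.choose i : ℂ) * (k.choose i : ℂ) * ((2 * I * (ξ : ℂ)) ^ i * (-(2 * I * (ξ : ℂ))) ^ i) *
            (((k - i).factorial : ℂ) * ((Real.sqrt (2 * Real.pi) : ℝ) : ℂ)) := by
          rw [dC]; push_cast; ring
      _ = ((k.factorial : ℂ) * (Real.sqrt (2 * Real.pi) : ℂ))⁻¹ * (Real.exp (2 * ξ ^ 2) : ℂ) *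
            (k.choose i : ℂ) * (k.choose i : ℂ) * (4 * (ξ : ℂ) ^ 2) ^ i *
            (((k - i).factorial : ℂ) * ((Real.sqrt (2 * Real.pi) : ℝ) : ℂ)) := by rw [hpow]
      _ = _ := by
          have h2 : ((Real.sqrt 2 : ℝ) : ℂ) ≠ 0 :=
            Complex.ofReal_ne_zero.mpr (Real.sqrt_ne_zero'.mpr (by norm_num))
          have hpi : ((Real.sqrt Real.pi : ℝ) : ℂ) ≠ 0 :=
            Complex.ofReal_ne_zero.mpr (Real.sqrt_ne_zero'.mpr Real.pi_pos)
          rw [hfact]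
          field_simp
  rw [Finset.sum_congr rfl hval, ← Finset.mul_sum]
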